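/- Let H ∈ (3/4, 1). Then ∫_{ℝ²} ( ∫_0^1 (u-x)₊^{H-3/2} · (u-y)₊^{H-3/2} du )² dx dy = B(H-1/2, 2-2H)² / ((4H-3)(2H-1)). -/

import Mathlib

open MeasureTheory Set

/-- The Euler Beta function `B(a,b) = Γ(a)Γ(b)/Γ(a+b)`. -/
noncomputable def eulerBeta (a b : ℝ) : ℝ := Real.Gamma a * Real.Gamma b / Real.Gamma (a + b)

/-- `(a)₊^p`: `a ^ p` (real power) when `a > 0`, and `0` when `a ≤ 0`. -/
noncomputable def posPow (a p : ℝ) : ℝ := if 0 < a then a ^ p else 0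

namespace S17


lemma posPow_nonneg (a p : ℝ) : 0 ≤ posPow a p := by
  unfold posPow; split
  · positivity
  · exact le_rfl

lemma posPow_of_pos {a : ℝ} (h : 0 < a) (p : ℝ) : posPow a p = a ^ p := if_pos h

lemma posPow_of_nonpos {a : ℝ} (h : a ≤ 0) (p : ℝ) : posPow a p = 0 := if_neg (not_lt.mpr h)

lemma measurable_posPow (p : ℝ) : Measurable fun a => posPow a p := by
  unfold posPow
  exact Measurable.ite (measurableSet_lt measurable_const measurable_id) (by fun_prop)
    measurable_const

/-- 1D change of variables for lintegral. -/
lemma lintegral_image {s : Set ℝ} {f f' : ℝ → ℝ} (hs : MeasurableSet s)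
    (hf' : ∀ x ∈ s, HasDerivWithinAt f (f' x) s x) (hf : InjOn f s) (g : ℝ → ENNReal) :
    ∫⁻ x in f '' s, g x = ∫⁻ x in s, ENNReal.ofReal |f' x| * g (f x) := by
  simpa only [ContinuousLinearMap.det_toSpanSingleton] using
    lintegral_image_eq_lintegral_abs_det_fderiv_mul volume hs
      (fun x hx => (hf' x hx).hasFDerivWithinAt) hf g

lemma betaIntegrable {a b : ℝ} (ha : 0 < a) (hb : 0 < b) :
    IntervalIntegrable (fun x : ℝ => x ^ (a - 1) * (1 - x) ^ (b - 1)) volume 0 1 := by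
  have h1 : IntervalIntegrable (fun x : ℝ => x ^ (a - 1) * (1 - x) ^ (b - 1)) volume 0 (1/2) := by
    apply (intervalIntegral.intervalIntegrable_rpow' (by linarith)).mul_continuousOn
    apply ContinuousOn.rpow_const
    · fun_prop
    · intro x hx
      rw [uIcc_of_le (by norm_num)] at hx
      left; intro h; have := hx.2; nlinarith [hx.1, hx.2]
  have h2 : IntervalIntegrable (fun x : ℝ => x ^ (a - 1) * (1 - x) ^ (b - 1)) volume (1/2) 1 := by
    have base : IntervalIntegrable (fun x : ℝ => (1 - x) ^ (b - 1)) volume (1/2) 1 := by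
      have := (intervalIntegral.intervalIntegrable_rpow' (a := 0) (b := 1/2) (r := b - 1) (by linarith))
      have h := this.comp_sub_left 1
      norm_num at h
      exact h.symm
    have : IntervalIntegrable (fun x : ℝ => (1 - x) ^ (b - 1) * x ^ (a - 1)) volume (1/2) 1 := by
      apply base.mul_continuousOn
      apply ContinuousOn.rpow_const (by fun_prop)
      intro x hx
      rw [uIcc_of_le (by norm_num)] at hx
      left; intro h; rw [h] at hx; norm_num at hx
    simpa [mul_comm] using this
  exact h1.trans h2

lemma betaIntegral_real {a b : ℝ} (ha : 0 < a) (hb : 0 < b) :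
    ∫ x in (0:ℝ)..1, x ^ (a - 1) * (1 - x) ^ (b - 1) = eulerBeta a b := by
  have key := Complex.Gamma_mul_Gamma_eq_betaIntegral (s := (a:ℂ)) (t := (b:ℂ))
    (by simpa using ha) (by simpa using hb)
  have hcongr : Complex.betaIntegral (a:ℂ) (b:ℂ)
      = ((∫ x in (0:ℝ)..1, x ^ (a - 1) * (1 - x) ^ (b - 1) : ℝ) : ℂ) := by
    rw [Complex.betaIntegral, ← intervalIntegral.integral_ofReal]
    refine intervalIntegral.integral_congr_ae ?_
    have h01 : ∀ᵐ x : ℝ, x ∈ Set.uIoc (0:ℝ) 1 → x ≠ 1 := by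
      filter_upwards [compl_mem_ae_iff.mpr (Real.volume_singleton (a := (1:ℝ)))] with x hx _
      exact hx
    filter_upwards [h01] with x hx hmem
    have hx01 : 0 < x ∧ x < 1 := by
      rcases (uIoc_of_le (by norm_num : (0:ℝ) ≤ 1) ▸ hmem) with ⟨h1, h2⟩
      exact ⟨h1, lt_of_le_of_ne h2 (hx hmem)⟩
    rw [Complex.ofReal_mul, Complex.ofReal_cpow hx01.1.le, Complex.ofReal_cpow (by linarith [hx01.2] : (0:ℝ) ≤ 1 - x)]
    push_cast
    ring
  have hGab : (Complex.Gamma ((a:ℂ) + b)) = ((Real.Gamma (a+b) : ℝ) : ℂ) := by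
    rw [← Complex.ofReal_add, Complex.Gamma_ofReal]
  have hGne : Real.Gamma (a + b) ≠ 0 := (Real.Gamma_pos_of_pos (by linarith)).ne'
  rw [hcongr, hGab, Complex.Gamma_ofReal, Complex.Gamma_ofReal] at key
  have : ((Real.Gamma a * Real.Gamma b : ℝ) : ℂ)
      = ((Real.Gamma (a+b) * ∫ x in (0:ℝ)..1, x ^ (a - 1) * (1 - x) ^ (b - 1) : ℝ) : ℂ) := by
    push_cast; exact key
  have hr := Complex.ofReal_injective this
  rw [eulerBeta, eq_div_iff hGne]
  linarith [hr]


lemma lintegral_beta {a b : ℝ} (ha : 0 < a) (hb : 0 < b) :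
    ∫⁻ t in Ioi (0:ℝ), ENNReal.ofReal (t ^ (a - 1) * (1 + t) ^ (-(a + b)))
      = ENNReal.ofReal (eulerBeta a b) := by
  have himg : Ioi (0:ℝ) = (fun s => s / (1 - s)) '' Ioo (0:ℝ) 1 := by
    ext t
    constructor
    · intro ht
      have ht0 : (0:ℝ) < t := mem_Ioi.mp ht
      have h1 : (0:ℝ) < 1 + t := by linarith
      refine ⟨t / (1 + t), ⟨by positivity, ?_⟩, ?_⟩
      · rw [div_lt_one h1]; linarith
      · field_simp
        ring
    · rintro ⟨s, ⟨hs0, hs1⟩, rfl⟩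
      exact mem_Ioi.mpr (div_pos hs0 (by linarith))
  have hderiv : ∀ s ∈ Ioo (0:ℝ) 1,
      HasDerivWithinAt (fun s => s / (1 - s)) (((1 - s) ^ 2)⁻¹) (Ioo (0:ℝ) 1) s := by
    intro s hs
    have h1s : (1:ℝ) - s ≠ 0 := by
      simp only [mem_Ioo] at hs; intro h; linarith [sub_eq_zero.mp h]
    have hd : HasDerivAt (fun s : ℝ => s / (1 - s)) ((1 * (1 - s) - s * (-1)) / (1 - s) ^ 2) s :=
      (hasDerivAt_id s).div ((hasDerivAt_id s).const_sub 1) h1s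
    have : (1 * (1 - s) - s * (-1)) / (1 - s) ^ 2 = ((1 - s) ^ 2)⁻¹ := by ring
    rw [this] at hd
    exact hd.hasDerivWithinAt
  have hinj : InjOn (fun s : ℝ => s / (1 - s)) (Ioo 0 1) := by
    rintro s1 ⟨h10, h11⟩ s2 ⟨h20, h21⟩ h
    simp only at h
    have n1 : (1:ℝ) - s1 ≠ 0 := by linarith
    have n2 : (1:ℝ) - s2 ≠ 0 := by linarith
    field_simp at h
    nlinarith
  rw [himg, lintegral_image measurableSet_Ioo hderiv hinj]
  have hcongr : ∫⁻ s in Ioo (0:ℝ) 1, ENNReal.ofReal |((1 - s) ^ 2)⁻¹|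
        * ENNReal.ofReal ((s / (1 - s)) ^ (a - 1) * (1 + s / (1 - s)) ^ (-(a + b)))
      = ∫⁻ s in Ioo (0:ℝ) 1, ENNReal.ofReal (s ^ (a - 1) * (1 - s) ^ (b - 1)) := by
    refine setLIntegral_congr_fun measurableSet_Ioo ?_
    rintro s ⟨hs0, hs1⟩
    beta_reduce
    have h1s : (0:ℝ) < 1 - s := by linarith
    rw [← ENNReal.ofReal_mul (abs_nonneg _)]
    congr 1
    have e2 : 1 + s / (1 - s) = (1 - s)⁻¹ := by field_simp; ring
    have e2 : 1 + s / (1 - s) = (1 - s)⁻¹ := by field_simp; ring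
    have A : (s / (1 - s)) ^ (a - 1) = s ^ (a - 1) * ((1 - s) ^ (a - 1))⁻¹ := by
      rw [Real.div_rpow hs0.le h1s.le, div_eq_mul_inv]
    have B : (1 + s / (1 - s)) ^ (-(a + b)) = ((1 - s) ^ (-(a + b)))⁻¹ := by
      rw [e2, Real.inv_rpow h1s.le]
    have key : ∀ p q : ℝ, (1 - s) ^ p * (1 - s) ^ q = (1 - s) ^ (p + q) :=
      fun p q => (Real.rpow_add h1s p q).symm
    have nat2 : (1 - s) ^ (2:ℕ) = (1 - s) ^ ((2:ℕ):ℝ) := (Real.rpow_natCast _ 2).symm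
    have hne : ∀ p : ℝ, (1 - s) ^ p ≠ 0 := fun p => (Real.rpow_pos_of_pos h1s p).ne'
    rw [A, B, abs_of_pos (by positivity), nat2]
    field_simp
    simp only [key]
    convert (Real.rpow_zero (1 - s)).symm using 2
    push_cast; ring
  rw [hcongr, Measure.restrict_congr_set Ioo_ae_eq_Ioc,
    ← ofReal_integral_eq_lintegral_ofReal]
  · rw [← intervalIntegral.integral_of_le (by norm_num : (0:ℝ) ≤ 1), betaIntegral_real ha hb]
  · exact (intervalIntegrable_iff_integrableOn_Ioc_of_le (by norm_num)).mp (betaIntegrable ha hb)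
  · filter_upwards [ae_restrict_mem measurableSet_Ioc] with s hs
    have := hs.1
    have h1 : (0:ℝ) ≤ 1 - s := by linarith [hs.2]
    positivity


lemma lemB {H : ℝ} (hH : H ∈ Ioo (3/4:ℝ) 1) {u v : ℝ} (hvu : v < u) :
    ∫⁻ x : ℝ, ENNReal.ofReal (posPow (u - x) (H - 3/2))
        * ENNReal.ofReal (posPow (v - x) (H - 3/2))
      = ENNReal.ofReal (eulerBeta (H - 1/2) (2 - 2*H) * (u - v) ^ (2*H - 2)) := by
  obtain ⟨hH1, hH2⟩ := hH
  set α := H - 3/2 with hα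
  have hd : (0:ℝ) < u - v := by linarith
  -- step 1 : reduce to Iio v
  rw [← lintegral_add_compl (A := Iio v) _ measurableSet_Iio]
  have hz : ∫⁻ x in (Iio v)ᶜ, ENNReal.ofReal (posPow (u - x) α) * ENNReal.ofReal (posPow (v - x) α)
      = 0 := by
    rw [compl_Iio]
    rw [setLIntegral_congr_fun measurableSet_Ici
      (fun x hx => ?_), lintegral_zero]
    rw [posPow_of_nonpos (a := v - x) (by simp only [mem_Ici] at hx; linarith) α]
    simp
  rw [hz, add_zero]
  -- step 2 : x = v - s
  have himg : Iio v = (fun s => v - s) '' Ioi 0 := by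
    ext x; constructor
    · intro hx; exact ⟨v - x, by simp only [mem_Ioi]; linarith [mem_Iio.mp hx], by ring⟩
    · rintro ⟨s, hs, rfl⟩; simp only [mem_Iio]; linarith [mem_Ioi.mp hs]
  rw [himg, lintegral_image (f := fun s => v - s) (f' := fun _ => -1) measurableSet_Ioi
    (fun s _ => by simpa using (((hasDerivAt_id s).const_sub v)).hasDerivWithinAt)
    (fun s _ t _ h => by simpa using h)]
  -- step 3 : simplify integrand
  have hc1 : ∫⁻ s in Ioi (0:ℝ), ENNReal.ofReal |(-1:ℝ)|
        * (ENNReal.ofReal (posPow (u - (v - s)) α) * ENNReal.ofReal (posPow (v - (v - s)) α))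
      = ∫⁻ s in Ioi (0:ℝ), ENNReal.ofReal (((u - v) + s) ^ α * s ^ α) := by
    refine setLIntegral_congr_fun measurableSet_Ioi (fun s hs => ?_)
    have hs0 : (0:ℝ) < s := mem_Ioi.mp hs
    rw [show u - (v - s) = (u - v) + s by ring, show v - (v - s) = s by ring,
      posPow_of_pos (by linarith) α, posPow_of_pos hs0 α,
      ← ENNReal.ofReal_mul (by positivity), abs_neg, abs_one, ENNReal.ofReal_one, one_mul]
  rw [hc1]
  -- step 4 : s = (u-v) * t
  have himg2 : Ioi (0:ℝ) = (fun t => (u - v) * t) '' Ioi 0 := by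
    ext s; constructor
    · intro hs
      have hs0 : (0:ℝ) < s := mem_Ioi.mp hs
      exact ⟨s / (u - v), mem_Ioi.mpr (by positivity), by field_simp⟩
    · rintro ⟨t, ht, rfl⟩
      exact mem_Ioi.mpr (by have := mem_Ioi.mp ht; positivity)
  rw [himg2, lintegral_image (f := fun t => (u - v) * t) (f' := fun _ => u - v)
    measurableSet_Ioi
    (fun t _ => by simpa using ((hasDerivAt_id t).const_mul (u - v)).hasDerivWithinAt)
    (fun t1 _ t2 _ h => by
      simp only at h
      exact mul_left_cancel₀ hd.ne' h)]
  -- step 5 : simplify to beta integrand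
  have ha : (0:ℝ) < H - 1/2 := by linarith
  have hb : (0:ℝ) < 2 - 2*H := by linarith
  have hc2 : ∫⁻ t in Ioi (0:ℝ), ENNReal.ofReal |u - v|
        * ENNReal.ofReal ((u - v + (u - v) * t) ^ α * ((u - v) * t) ^ α)
      = ∫⁻ t in Ioi (0:ℝ), ENNReal.ofReal ((u - v) ^ (2*H - 2))
        * ENNReal.ofReal (t ^ ((H - 1/2) - 1) * (1 + t) ^ (-((H - 1/2) + (2 - 2*H)))) := by
    refine setLIntegral_congr_fun measurableSet_Ioi (fun t ht => ?_)
    have ht0 : (0:ℝ) < t := mem_Ioi.mp ht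
    rw [← ENNReal.ofReal_mul (by positivity), ← ENNReal.ofReal_mul (by positivity)]
    congr 1
    have e1 : u - v + (u - v) * t = (u - v) * (1 + t) := by ring
    rw [abs_of_pos hd, e1, Real.mul_rpow hd.le (by linarith),
      Real.mul_rpow hd.le ht0.le,
      show (H - 1/2) - 1 = α by rw [hα]; ring,
      show -((H - 1/2) + (2 - 2*H)) = α by rw [hα]; ring]
    rw [show (2*H - 2 : ℝ) = 1 + α + α by rw [hα]; ring, Real.rpow_add hd, Real.rpow_add hd,
      Real.rpow_one]
    ring
  rw [hc2, lintegral_const_mul _ (by fun_prop), lintegral_beta ha hb,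
    ← ENNReal.ofReal_mul (by positivity), mul_comm]


lemma integrableOn_posPow {α : ℝ} (hα : -1 < α) (c : ℝ) :
    IntegrableOn (fun u => posPow (u - c) α) (Ioc 0 1) volume := by
  have heq : (fun u => posPow (u - c) α)
      = Set.indicator (Ioi c) (fun u => (u - c) ^ α) := by
    ext u
    by_cases h : c < u
    · rw [indicator_of_mem (mem_Ioi.mpr h), posPow_of_pos (by linarith) α]
    · rw [indicator_of_notMem (by simpa using h), posPow_of_nonpos (by linarith [not_lt.mp h]) α]
  rw [heq, IntegrableOn, integrable_indicator_iff measurableSet_Ioi, IntegrableOn,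
    Measure.restrict_restrict measurableSet_Ioi]
  have hsub : Ioi c ∩ Ioc 0 1 ⊆ Ioc c (max 1 (c + 1)) :=
    fun u hu => ⟨mem_Ioi.mp hu.1, le_trans hu.2.2 (le_max_left _ _)⟩
  refine IntegrableOn.mono_set ?_ hsub
  have hi := (intervalIntegral.intervalIntegrable_rpow' (a := 0) (b := max 1 (c+1) - c) hα).comp_sub_right c
  norm_num at hi
  have hle : c ≤ max 1 (c + 1) := by
    have := le_max_right (1:ℝ) (c+1); linarith
  have := (intervalIntegrable_iff_integrableOn_Ioc_of_le hle).mp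
    (by simpa using hi)
  exact this

lemma integrableOn_posPow_mul {α : ℝ} (hα1 : -1 < α) (hα2 : α < 0) {x y : ℝ} (hxy : x < y) :
    IntegrableOn (fun u => posPow (u - x) α * posPow (u - y) α) (Ioc 0 1) volume := by
  have hbound : ∀ u : ℝ, posPow (u - x) α * posPow (u - y) α
      ≤ (y - x) ^ α * posPow (u - y) α := by
    intro u
    by_cases h : y < u
    · rw [posPow_of_pos (a := u - y) (by linarith) α, posPow_of_pos (a := u - x) (by linarith) α]
      apply mul_le_mul_of_nonneg_right _ (Real.rpow_nonneg (by linarith) α)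
      exact Real.rpow_le_rpow_of_nonpos (by linarith) (by linarith) hα2.le
    · rw [posPow_of_nonpos (a := u - y) (by linarith [not_lt.mp h]) α, mul_zero, mul_zero]
  have hg : IntegrableOn (fun u => (y - x) ^ α * posPow (u - y) α) (Ioc 0 1) volume :=
    (integrableOn_posPow hα1 y).const_mul _
  refine Integrable.mono hg ?_ ?_
  · exact ((measurable_posPow α).comp (measurable_id.sub_const x)).mul
      ((measurable_posPow α).comp (measurable_id.sub_const y)) |>.aestronglyMeasurable
  · refine Filter.Eventually.of_forall fun u => ?_
    rw [Real.norm_of_nonneg (mul_nonneg (posPow_nonneg _ _) (posPow_nonneg _ _)),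
      Real.norm_of_nonneg (mul_nonneg (Real.rpow_nonneg (by linarith) α) (posPow_nonneg _ _))]
    exact hbound u

lemma diag_null (μ ν : Measure ℝ) [SFinite ν] [NullSingletonClass ν] :
    (μ.prod ν) {p : ℝ × ℝ | p.1 = p.2} = 0 := by
  rw [Measure.prod_apply (measurableSet_eq_fun measurable_fst measurable_snd)]
  have : ∀ a : ℝ, ν (Prod.mk a ⁻¹' {p : ℝ × ℝ | p.1 = p.2}) = 0 := by
    intro a
    have : Prod.mk a ⁻¹' {p : ℝ × ℝ | p.1 = p.2} = {a} := by
      ext z; simp [eq_comm]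
    rw [this]; exact measure_singleton a
  simp [this]

lemma inner_eval {γ : ℝ} (h1 : -1 < γ) {u : ℝ} (hu : u ∈ Ioc (0:ℝ) 1) :
    ∫⁻ v in Ioc (0:ℝ) 1, ENNReal.ofReal (|u - v| ^ γ)
      = ENNReal.ofReal (u ^ (γ+1) / (γ+1) + (1-u) ^ (γ+1) / (γ+1)) := by
  obtain ⟨hu0, hu1⟩ := hu
  have hγ1 : (0:ℝ) < γ + 1 := by linarith
  rw [← Ioc_union_Ioc_eq_Ioc hu0.le hu1,
    lintegral_union measurableSet_Ioc (Ioc_disjoint_Ioc_of_le le_rfl)]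
  have hA : ∫⁻ v in Ioc (0:ℝ) u, ENNReal.ofReal (|u - v| ^ γ)
      = ENNReal.ofReal (u ^ (γ+1) / (γ+1)) := by
    have hcong : ∫⁻ v in Ioc (0:ℝ) u, ENNReal.ofReal (|u - v| ^ γ)
        = ∫⁻ v in Ioc (0:ℝ) u, ENNReal.ofReal ((u - v) ^ γ) := by
      refine setLIntegral_congr_fun measurableSet_Ioc (fun v hv => ?_)
      rw [abs_of_nonneg (by linarith [hv.2])]
    have hint : IntegrableOn (fun v => (u - v) ^ γ) (Ioc 0 u) volume := by
      have := (intervalIntegral.intervalIntegrable_rpow' (a := 0) (b := u) h1).comp_sub_left u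
      norm_num at this
      exact (intervalIntegrable_iff_integrableOn_Ioc_of_le hu0.le).mp this.symm
    rw [hcong, ← ofReal_integral_eq_lintegral_ofReal hint
      (by filter_upwards [ae_restrict_mem measurableSet_Ioc] with v hv
          exact Real.rpow_nonneg (by linarith [hv.2]) γ)]
    congr 1
    rw [← intervalIntegral.integral_of_le hu0.le]
    have hcs := intervalIntegral.integral_comp_sub_left (a := 0) (b := u) (fun x => x ^ γ) u
    norm_num at hcs
    rw [hcs]
    rw [integral_rpow (Or.inl h1), Real.zero_rpow (by linarith)]
    ring
  have hB : ∫⁻ v in Ioc u 1, ENNReal.ofReal (|u - v| ^ γ)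
      = ENNReal.ofReal ((1-u) ^ (γ+1) / (γ+1)) := by
    have hcong : ∫⁻ v in Ioc u 1, ENNReal.ofReal (|u - v| ^ γ)
        = ∫⁻ v in Ioc u 1, ENNReal.ofReal ((v - u) ^ γ) := by
      refine setLIntegral_congr_fun measurableSet_Ioc (fun v hv => ?_)
      rw [abs_sub_comm, abs_of_nonneg (by linarith [hv.1])]
    have hint : IntegrableOn (fun v => (v - u) ^ γ) (Ioc u 1) volume := by
      have := (intervalIntegral.intervalIntegrable_rpow' (a := 0) (b := 1 - u) h1).comp_sub_right u
      norm_num at this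
      exact (intervalIntegrable_iff_integrableOn_Ioc_of_le hu1).mp this
    rw [hcong, ← ofReal_integral_eq_lintegral_ofReal hint
      (by filter_upwards [ae_restrict_mem measurableSet_Ioc] with v hv
          exact Real.rpow_nonneg (by linarith [hv.1]) γ)]
    congr 1
    rw [← intervalIntegral.integral_of_le hu1]
    have hcs := intervalIntegral.integral_comp_sub_right (a := u) (b := 1) (fun x => x ^ γ) u
    norm_num at hcs
    rw [hcs]
    rw [integral_rpow (Or.inl h1), Real.zero_rpow (by linarith)]
    ring
  rw [hA, hB, ← ENNReal.ofReal_add (by positivity)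
    (div_nonneg (Real.rpow_nonneg (by linarith) _) (by linarith))]

lemma S_eval {γ : ℝ} (h1 : -1 < γ) :
    ∫⁻ u in Ioc (0:ℝ) 1, ∫⁻ v in Ioc (0:ℝ) 1, ENNReal.ofReal (|u - v| ^ γ)
      = ENNReal.ofReal (2 / ((γ+1)*(γ+2))) := by
  have hγ1 : (0:ℝ) < γ+1 := by linarith
  have hγ2 : (0:ℝ) < γ+2 := by linarith
  rw [setLIntegral_congr_fun measurableSet_Ioc
    (fun u hu => inner_eval h1 hu)]
  have hi2 : IntervalIntegrable (fun u : ℝ => (1-u) ^ (γ+1)) volume 0 1 := by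
    have := (intervalIntegral.intervalIntegrable_rpow' (a := 0) (b := 1) (r := γ+1)
      (by linarith)).comp_sub_left 1
    norm_num at this
    exact this.symm
  have hint : IntegrableOn (fun u : ℝ => u ^ (γ+1)/(γ+1) + (1-u) ^ (γ+1)/(γ+1))
      (Ioc 0 1) volume := by
    apply (intervalIntegrable_iff_integrableOn_Ioc_of_le (by norm_num)).mp
    exact ((intervalIntegral.intervalIntegrable_rpow' (by linarith)).div_const _).add
      (hi2.div_const _)
  rw [← ofReal_integral_eq_lintegral_ofReal hint
    (by filter_upwards [ae_restrict_mem measurableSet_Ioc] with u hu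
        have h0 : (0:ℝ) ≤ u := hu.1.le
        have h1' : (0:ℝ) ≤ 1 - u := by linarith [hu.2]
        positivity)]
  congr 1
  rw [← intervalIntegral.integral_of_le (by norm_num : (0:ℝ) ≤ 1)]
  rw [intervalIntegral.integral_add
    ((intervalIntegral.intervalIntegrable_rpow' (by linarith)).div_const _)
    (hi2.div_const _),
    intervalIntegral.integral_div, intervalIntegral.integral_div]
  have e1 : ∫ u in (0:ℝ)..1, u ^ (γ+1) = 1 / (γ+2) := by
    rw [integral_rpow (Or.inl (by linarith)), Real.one_rpow, Real.zero_rpow (by linarith)]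
    norm_num
    ring_nf
  have e2 : ∫ u in (0:ℝ)..1, (1-u) ^ (γ+1) = 1 / (γ+2) := by
    have hcs := intervalIntegral.integral_comp_sub_left (a := 0) (b := 1) (fun x => x ^ (γ+1)) 1
    norm_num at hcs
    rw [hcs, e1]
  rw [e1, e2]
  field_simp
  ring


lemma measurable_g {δ : Type*} [MeasurableSpace δ] {h1 h2 : δ → ℝ} (m1 : Measurable h1)
    (m2 : Measurable h2) (α : ℝ) :
    Measurable fun z => ENNReal.ofReal (posPow (h1 z - h2 z) α) :=
  ((measurable_posPow α).comp (m1.sub m2)).ennreal_ofReal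


end S17

open S17 in
/-- For `H ∈ (3/4, 1)`,
`∫_{ℝ²} (∫_0^1 (u-x)₊^(H-3/2) (u-y)₊^(H-3/2) du)² dx dy
  = B(H-1/2, 2-2H)² / ((4H-3)(2H-1))`. -/
theorem stmt17 (H : ℝ) (hH : H ∈ Ioo (3 / 4 : ℝ) 1) :
    (∫ p : ℝ × ℝ,
        (∫ u in (0 : ℝ)..1, posPow (u - p.1) (H - 3 / 2) * posPow (u - p.2) (H - 3 / 2)) ^ 2)
      = eulerBeta (H - 1 / 2) (2 - 2 * H) ^ 2 / ((4 * H - 3) * (2 * H - 1)) := by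
  obtain ⟨hH1, hH2⟩ := hH
  set α : ℝ := H - 3/2 with hαdef
  have hα1 : (-1:ℝ) < α := by rw [hαdef]; linarith
  have hα2 : α < 0 := by rw [hαdef]; linarith
  set eB : ℝ := eulerBeta (H - 1/2) (2 - 2*H) with heB
  have heBpos : 0 < eB := by
    rw [heB]
    unfold eulerBeta
    have g1 := Real.Gamma_pos_of_pos (show (0:ℝ) < H - 1/2 by linarith)
    have g2 := Real.Gamma_pos_of_pos (show (0:ℝ) < 2 - 2*H by linarith)
    have g3 := Real.Gamma_pos_of_pos (show (0:ℝ) < (H - 1/2) + (2 - 2*H) by linarith)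
    positivity
  set I : Set ℝ := Ioc (0:ℝ) 1 with hI
  set μI : Measure ℝ := volume.restrict I with hμI
  set g : ℝ → ℝ → ENNReal := fun c x => ENNReal.ofReal (posPow (c - x) α) with hg
  set γ : ℝ := 4*H - 4 with hγ
  have hγ1 : (-1:ℝ) < γ := by rw [hγ]; linarith
  -- the inner integrand and its basic properties
  set f : ℝ × ℝ → ℝ → ℝ := fun p u => posPow (u - p.1) α * posPow (u - p.2) α with hf
  have hfmeas : Measurable (Function.uncurry f) := by
    apply Measurable.mul
    · exact (measurable_posPow α).comp (measurable_snd.sub (measurable_fst.comp measurable_fst))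
    · exact (measurable_posPow α).comp (measurable_snd.sub (measurable_snd.comp measurable_fst))
  have hKmeas : StronglyMeasurable fun p : ℝ × ℝ => ∫ u, f p u ∂μI :=
    StronglyMeasurable.integral_prod_right hfmeas.stronglyMeasurable
  -- rewrite interval integral as integral over μI
  have hKrw : ∀ p : ℝ × ℝ,
      (∫ u in (0:ℝ)..1, posPow (u - p.1) α * posPow (u - p.2) α) = ∫ u, f p u ∂μI := by
    intro p
    rw [intervalIntegral.integral_of_le (by norm_num : (0:ℝ) ≤ 1)]
  simp_rw [hKrw]
  -- step M1 : to lintegral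
  rw [integral_eq_lintegral_of_nonneg_ae
    (Filter.Eventually.of_forall fun p => sq_nonneg _)
    ((hKmeas.measurable.pow_const 2).aestronglyMeasurable)]
  -- step M2 : a.e. identify with double lintegral
  have hdiagvol : (volume : Measure (ℝ × ℝ)) {p : ℝ × ℝ | p.1 = p.2} = 0 := by
    rw [Measure.volume_eq_prod]; exact diag_null _ _
  set Gf : ℝ × ℝ → ℝ × ℝ → ENNReal :=
    fun q p => (g q.1 p.1 * g q.2 p.1) * (g q.1 p.2 * g q.2 p.2) with hGf
  have hM2 : ∀ᵐ p : ℝ × ℝ, ENNReal.ofReal ((∫ u, f p u ∂μI) ^ 2)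
      = ∫⁻ q, Gf q p ∂(μI.prod μI) := by
    filter_upwards [compl_mem_ae_iff.mpr hdiagvol] with p hp
    have hxy : p.1 ≠ p.2 := hp
    have hfint : IntegrableOn (f p) I volume := by
      rcases hxy.lt_or_gt with h | h
      · exact integrableOn_posPow_mul hα1 hα2 h
      · have h2 := integrableOn_posPow_mul hα1 hα2 h
        have he : (fun u => posPow (u - p.2) α * posPow (u - p.1) α) = f p := by
          funext u; simp only [hf]; ring
        rwa [he] at h2
    have hfnn : 0 ≤ᵐ[μI] f p :=
      Filter.Eventually.of_forall fun u => mul_nonneg (posPow_nonneg _ _) (posPow_nonneg _ _)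
    have hKnn : 0 ≤ ∫ u, f p u ∂μI := integral_nonneg fun u =>
      mul_nonneg (posPow_nonneg _ _) (posPow_nonneg _ _)
    have hofK : ENNReal.ofReal (∫ u, f p u ∂μI) = ∫⁻ u, ENNReal.ofReal (f p u) ∂μI :=
      ofReal_integral_eq_lintegral_ofReal hfint hfnn
    have hFmeas : Measurable fun u => ENNReal.ofReal (f p u) := by
      apply Measurable.ennreal_ofReal
      apply Measurable.mul
      · exact (measurable_posPow α).comp (measurable_id.sub_const p.1)
      · exact (measurable_posPow α).comp (measurable_id.sub_const p.2)
    rw [sq, ENNReal.ofReal_mul hKnn, hofK,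
      ← lintegral_prod_mul hFmeas.aemeasurable hFmeas.aemeasurable]
    refine lintegral_congr fun q => ?_
    simp only [hGf, hf, hg]
    rw [ENNReal.ofReal_mul (posPow_nonneg _ _), ENNReal.ofReal_mul (posPow_nonneg _ _),
      mul_mul_mul_comm]
  rw [lintegral_congr_ae hM2]
  -- step M3 : swap the two double integrals
  have hGm : Measurable fun z : (ℝ × ℝ) × (ℝ × ℝ) => Gf z.2 z.1 := by
    simp only [hGf, hg]
    exact ((measurable_g (by fun_prop) (by fun_prop) α).mul
        (measurable_g (by fun_prop) (by fun_prop) α)).mul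
      ((measurable_g (by fun_prop) (by fun_prop) α).mul
        (measurable_g (by fun_prop) (by fun_prop) α))
  rw [lintegral_lintegral_swap hGm.aemeasurable]
  -- step M4 : evaluate the inner ℝ² integral for u ≠ v
  have hdiagI : (μI.prod μI) {q : ℝ × ℝ | q.1 = q.2} = 0 := diag_null _ _
  have hgm1 : ∀ u v : ℝ, Measurable fun x : ℝ => g u x * g v x := fun u v =>
    (measurable_g measurable_const measurable_id α).mul
      (measurable_g measurable_const measurable_id α)
  have hM4 : ∀ᵐ q ∂(μI.prod μI), (∫⁻ p : ℝ × ℝ, Gf q p)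
      = ENNReal.ofReal (eB ^ 2) * ENNReal.ofReal (|q.1 - q.2| ^ γ) := by
    filter_upwards [compl_mem_ae_iff.mpr hdiagI] with q hq
    have huv : q.1 ≠ q.2 := hq
    have hmm : Measurable fun p : ℝ × ℝ => Gf q p := by
      simp only [hGf, hg]
      exact ((measurable_g (by fun_prop) (by fun_prop) α).mul
          (measurable_g (by fun_prop) (by fun_prop) α)).mul
        ((measurable_g (by fun_prop) (by fun_prop) α).mul
          (measurable_g (by fun_prop) (by fun_prop) α))
    rw [Measure.volume_eq_prod, lintegral_prod _ hmm.aemeasurable]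
    simp only [hGf]
    have hsplit : ∫⁻ x : ℝ, ∫⁻ y : ℝ, g q.1 x * g q.2 x * (g q.1 y * g q.2 y)
        = (∫⁻ x : ℝ, g q.1 x * g q.2 x) * (∫⁻ y : ℝ, g q.1 y * g q.2 y) := by
      simp_rw [lintegral_const_mul _ (hgm1 q.1 q.2)]
      rw [lintegral_mul_const _ (hgm1 q.1 q.2)]
    rw [hsplit]
    have hB2 : (∫⁻ x : ℝ, g q.1 x * g q.2 x)
        = ENNReal.ofReal (eB * |q.1 - q.2| ^ (2*H - 2)) := by
      rcases huv.lt_or_gt with h | h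
      · have hcomm : (∫⁻ x : ℝ, ENNReal.ofReal (posPow (q.1 - x) α)
              * ENNReal.ofReal (posPow (q.2 - x) α))
            = ∫⁻ x : ℝ, ENNReal.ofReal (posPow (q.2 - x) α)
              * ENNReal.ofReal (posPow (q.1 - x) α) :=
          lintegral_congr fun x => mul_comm _ _
        have := lemB (Set.mem_Ioo.mpr ⟨hH1, hH2⟩) h
        simp only [hg]
        rw [hcomm, this, abs_of_neg (by linarith : q.1 - q.2 < 0)]
        congr 2
        ring
      · have := lemB (Set.mem_Ioo.mpr ⟨hH1, hH2⟩) h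
        simp only [hg]
        rw [this, abs_of_pos (by linarith : 0 < q.1 - q.2)]
    rw [hB2, ← ENNReal.ofReal_mul (mul_nonneg heBpos.le (Real.rpow_nonneg (abs_nonneg _) _))]
    have habs : (0:ℝ) < |q.1 - q.2| := abs_pos.mpr (sub_ne_zero.mpr huv)
    rw [show eB * |q.1 - q.2| ^ (2*H - 2) * (eB * |q.1 - q.2| ^ (2*H - 2))
        = eB ^ 2 * (|q.1 - q.2| ^ (2*H - 2) * |q.1 - q.2| ^ (2*H - 2)) by ring,
      ← Real.rpow_add habs, show (2*H - 2) + (2*H - 2) = γ by rw [hγ]; ring,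
      ENNReal.ofReal_mul (by positivity)]
  rw [lintegral_congr_ae hM4, lintegral_const_mul _ (by fun_prop)]
  -- step M5 : evaluate the [0,1]² integral
  have hM5 : ∫⁻ q, ENNReal.ofReal (|q.1 - q.2| ^ γ) ∂(μI.prod μI)
      = ENNReal.ofReal (2 / ((γ+1)*(γ+2))) := by
    rw [lintegral_prod _ (by fun_prop)]
    exact S_eval hγ1
  have hpos2 : (0:ℝ) < 2/((γ+1)*(γ+2)) := by
    rw [hγ]
    apply div_pos (by norm_num)
    nlinarith
  rw [hM5, ← ENNReal.ofReal_mul (sq_nonneg eB),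
    ENNReal.toReal_ofReal (mul_nonneg (sq_nonneg eB) hpos2.le)]
  -- step M6 : algebra
  have h43 : (4*H - 3) ≠ 0 := by intro h; nlinarith
  have h21 : (2*H - 1) ≠ 0 := by intro h; nlinarith
  have hγ1' : γ + 1 = 4*H - 3 := by rw [hγ]; ring
  have hγ2' : γ + 2 = 2*(2*H - 1) := by rw [hγ]; ring
  rw [hγ1', hγ2']
  field_simp
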